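/- Let (Ω, ℙ) be a probability space and p ∈ (0,1). Let (t_m)_{m≥1} be positive integers with ∑_{m≥1} t_m = ∞, and set s_0 = 0 and s_m = t_1 + … + t_m. Let (τ_m)_{m≥1} be positive-integer-valued random variables such that ℙ(τ_1 > n) = (1−p)ⁿ for all n ∈ ℕ and, for every m ≥ 2 and every n ∈ ℕ, the conditional probability ℙ(τ_m > n ∣ τ_1 > t_1, …, τ_{m−1} > t_{m−1}) = (1−p)ⁿ. Define L = inf{m ≥ 1 : τ_m ≤ t_m}. Then L is finite almost surely and ℙ(s_{L−1} + τ_L > n) = (1−p)ⁿ for all n ∈ ℕ, i.e. s_{L−1} + τ_L is geometrically distributed with parameter p. -/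

import Mathlib

open MeasureTheory

/-- Proposition 5.3, discrete time. If the fragment escape times
`τ_m` are positive-integer valued with `P(τ_1 > n) = (1-p)^n` and the conditional
survival identity `P(τ_m > n ∣ τ_1 > t_1, …, τ_{m-1} > t_{m-1}) = (1-p)^n`, and
`∑ t_m = ∞`, then `L = inf {m ≥ 1 : τ_m ≤ t_m}` is finite almost surely and the
accumulated time `s_{L-1} + τ_L` is geometrically distributed with parameter `p`. -/
theorem parallel_step_escape_time_geometric
    {Ω : Type*} [MeasurableSpace Ω] (P : Measure Ω) [IsProbabilityMeasure P]
    (p : ℝ) (hp0 : 0 < p) (hp1 : p < 1)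
    (t : ℕ → ℕ) (ht : ∀ m, 1 ≤ m → 1 ≤ t m)
    (hdiv : Filter.Tendsto (fun M => ∑ i ∈ Finset.Icc 1 M, t i)
      Filter.atTop Filter.atTop)
    (τ : ℕ → Ω → ℕ) (hτmeas : ∀ m, Measurable (τ m))
    (hτpos : ∀ m ω, 1 ≤ m → 1 ≤ τ m ω)
    (h1 : ∀ n : ℕ, P {ω | n < τ 1 ω} = ENNReal.ofReal ((1 - p) ^ n))
    (hrec : ∀ m, 2 ≤ m → ∀ n : ℕ,
      P ({ω | n < τ m ω} ∩ ⋂ j ∈ Finset.Icc 1 (m - 1), {ω | t j < τ j ω})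
          / P (⋂ j ∈ Finset.Icc 1 (m - 1), {ω | t j < τ j ω})
        = ENNReal.ofReal ((1 - p) ^ n))
    (L : Ω → ℕ) (hL : ∀ ω, L ω = sInf {m | 1 ≤ m ∧ τ m ω ≤ t m}) :
    P {ω | ∃ m, 1 ≤ m ∧ τ m ω ≤ t m} = 1 ∧
    ∀ n : ℕ, P {ω | n < (∑ i ∈ Finset.Icc 1 (L ω - 1), t i) + τ (L ω) ω}
        = ENNReal.ofReal ((1 - p) ^ n) := by
  classical
  set q : ℝ := 1 - p with hq_def
  have hq0 : 0 < q := by rw [hq_def]; linarith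
  have hq1 : q < 1 := by rw [hq_def]; linarith
  set s : ℕ → ℕ := fun m => ∑ i ∈ Finset.Icc 1 m, t i with hs_def
  have hsum : ∀ m, ∑ i ∈ Finset.Icc 1 m, t i = s m := fun _ => rfl
  set B : ℕ → Set Ω := fun m => ⋂ j ∈ Finset.Icc 1 m, {ω | t j < τ j ω} with hB_def
  have hB0 : B 0 = Set.univ := by
    rw [hB_def]
    show (⋂ j ∈ Finset.Icc 1 0, {ω | t j < τ j ω}) = Set.univ
    rw [show Finset.Icc 1 0 = ∅ from Finset.Icc_eq_empty (by omega)]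
    simp
  have hs0 : s 0 = 0 := by simp [hs_def]
  have hsm : ∀ k, s (k + 1) = s k + t (k + 1) := by
    intro k
    rw [hs_def]
    exact Finset.sum_Icc_succ_top (by omega) t
  have hs_mono : ∀ a b : ℕ, a ≤ b → s a ≤ s b := by
    intro a b hab
    rw [hs_def]
    exact Finset.sum_le_sum_of_subset (Finset.Icc_subset_Icc_right hab)
  have hBmem : ∀ m (ω' : Ω), ω' ∈ B m ↔ ∀ j, 1 ≤ j → j ≤ m → t j < τ j ω' := by
    intro m ω'
    simp [hB_def, Finset.mem_Icc, and_imp]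
  -- main induction: measure of survival sets and the key conditional identity
  have H : ∀ m, P (B m) = ENNReal.ofReal (q ^ s m) ∧
      ∀ n' : ℕ, P ({ω' | n' < τ (m + 1) ω'} ∩ B m)
        = ENNReal.ofReal (q ^ n') * P (B m) := by
    intro m
    induction m with
    | zero =>
      constructor
      · simp [hB0, hs0]
      · intro n'
        rw [hB0, Set.inter_univ, h1 n', measure_univ, mul_one]
    | succ m ih =>
      have hBsucc : B (m + 1) = {ω' | t (m + 1) < τ (m + 1) ω'} ∩ B m := by
        ext ω'
        simp only [Set.mem_inter_iff, Set.mem_setOf_eq, hBmem]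
        constructor
        · intro h
          exact ⟨h _ (by omega) le_rfl, fun j h1j h2j => h j h1j (by omega)⟩
        · rintro ⟨ha, hb⟩ j hj1 hj2
          rcases Nat.lt_or_ge j (m + 1) with h | h
          · exact hb j hj1 (by omega)
          · have : j = m + 1 := by omega
            subst this; exact ha
      have hPB1 : P (B (m + 1)) = ENNReal.ofReal (q ^ s (m + 1)) := by
        rw [hBsucc, ih.2 (t (m + 1)), ih.1,
          ← ENNReal.ofReal_mul (by positivity), ← pow_add]
        have heq : t (m + 1) + s m = s (m + 1) := by rw [hsm]; omega
        rw [heq]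
      refine ⟨hPB1, ?_⟩
      intro n'
      have h2 := hrec (m + 2) (by omega) n'
      have hBeq : (⋂ j ∈ Finset.Icc 1 (m + 2 - 1), {ω | t j < τ j ω}) = B (m + 1) := rfl
      rw [hBeq] at h2
      have hne0 : P (B (m + 1)) ≠ 0 := by
        rw [hPB1]
        exact (ENNReal.ofReal_pos.mpr (by positivity)).ne'
      have hnetop : P (B (m + 1)) ≠ ⊤ := measure_ne_top P _
      have := (ENNReal.eq_div_iff hne0 hnetop).mp h2.symm
      rw [← this, mul_comm]
  have hPB : ∀ m, P (B m) = ENNReal.ofReal (q ^ s m) := fun m => (H m).1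
  have hkey : ∀ m (n' : ℕ), P ({ω' | n' < τ (m + 1) ω'} ∩ B m)
      = ENNReal.ofReal (q ^ (n' + s m)) := by
    intro m n'
    rw [(H m).2 n', hPB m, ← ENNReal.ofReal_mul (by positivity), ← pow_add]
  -- Part 1 : escape happens a.s.
  set S : Set Ω := {ω | ∃ m, 1 ≤ m ∧ τ m ω ≤ t m} with hS_def
  have hSmeas : MeasurableSet S := by
    have hrepr : S = ⋃ m, {ω' | 1 ≤ m ∧ τ m ω' ≤ t m} := by
      rw [hS_def]; ext ω'; simp
    rw [hrepr]
    refine MeasurableSet.iUnion fun m => ?_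
    by_cases h : 1 ≤ m
    · have : {ω' | 1 ≤ m ∧ τ m ω' ≤ t m} = τ m ⁻¹' Set.Iic (t m) := by
        ext ω'; simp [h]
      rw [this]
      exact (hτmeas m) measurableSet_Iic
    · have : {ω' | 1 ≤ m ∧ τ m ω' ≤ t m} = ∅ := by ext ω'; simp [h]
      rw [this]; exact MeasurableSet.empty
  have hsub : ∀ m, Sᶜ ⊆ B m := by
    intro m ω' hω'
    rw [hBmem]
    intro j hj1 hjm
    by_contra hc
    push_neg at hc
    exact hω' ⟨j, hj1, hc⟩
  have hcompl : P Sᶜ = 0 := by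
    have hle : ∀ m, P Sᶜ ≤ ENNReal.ofReal (q ^ s m) :=
      fun m => (hPB m) ▸ measure_mono (hsub m)
    have ht1 : Filter.Tendsto (fun k : ℕ => q ^ k) Filter.atTop (nhds 0) :=
      tendsto_pow_atTop_nhds_zero_of_lt_one hq0.le hq1
    have ht2 : Filter.Tendsto (fun m => ENNReal.ofReal (q ^ s m))
        Filter.atTop (nhds 0) := by
      have := ENNReal.tendsto_ofReal (ht1.comp hdiv)
      simpa [Function.comp] using this
    exact le_antisymm (ge_of_tendsto' ht2 hle) zero_le
  have hS1 : P S = 1 := by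
    have h := measure_add_measure_compl (μ := P) hSmeas
    rw [hcompl, add_zero, measure_univ] at h
    exact h
  refine ⟨hS1, ?_⟩
  -- Part 2
  intro n
  have hex : ∃ m, n < s m := (hdiv.eventually (Filter.eventually_gt_atTop n)).exists
  have hMne : Nat.find hex ≠ 0 := by
    intro h
    have := Nat.find_spec hex
    rw [h, hs0] at this
    omega
  obtain ⟨K, hK⟩ : ∃ K, Nat.find hex = K + 1 := ⟨Nat.find hex - 1, by omega⟩
  have hnK : s K ≤ n := by
    have := Nat.find_min hex (m := K) (by omega)
    omega
  have hnM : n < s (K + 1) := by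
    have := Nat.find_spec hex
    rwa [hK] at this
  set R : Set Ω := {ω' | n - s K < τ (K + 1) ω'} ∩ B K with hR_def
  have hPR : P R = ENNReal.ofReal (q ^ n) := by
    rw [hR_def, hkey K (n - s K), Nat.sub_add_cancel hnK]
  have hinterS : ∀ A : Set Ω, P A = P (A ∩ S) := by
    intro A
    refine le_antisymm ?_ (measure_mono Set.inter_subset_left)
    have h0 : P (A \ S) = 0 :=
      measure_mono_null (fun x hx => hx.2) hcompl
    calc P A = P ((A ∩ S) ∪ (A \ S)) := by rw [Set.inter_union_diff]
      _ ≤ P (A ∩ S) + P (A \ S) := measure_union_le _ _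
      _ = P (A ∩ S) := by rw [h0, add_zero]
  have hclaim : ∀ ω', ω' ∈ S →
      ((n < s (L ω' - 1) + τ (L ω') ω') ↔ ω' ∈ R) := by
    intro ω' hω'
    have hne : {m | 1 ≤ m ∧ τ m ω' ≤ t m}.Nonempty := hω'
    have hmem : 1 ≤ L ω' ∧ τ (L ω') ω' ≤ t (L ω') := by
      have := Nat.sInf_mem hne
      rw [← hL ω'] at this
      exact this
    have hmin : ∀ j, 1 ≤ j → j < L ω' → t j < τ j ω' := by
      intro j hj1 hjl
      by_contra hc
      push_neg at hc
      have h2 := Nat.sInf_le (show j ∈ {m | 1 ≤ m ∧ τ m ω' ≤ t m} from ⟨hj1, hc⟩)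
      rw [← hL ω'] at h2
      omega
    rw [hR_def]
    simp only [Set.mem_inter_iff, Set.mem_setOf_eq, hBmem]
    rcases lt_trichotomy (L ω') (K + 1) with hc | hc | hc
    · -- L ω' ≤ K : both sides false
      obtain ⟨a, ha⟩ : ∃ a, L ω' = a + 1 := ⟨L ω' - 1, by omega⟩
      have h1' : s (L ω' - 1) + τ (L ω') ω' ≤ s (L ω') := by
        rw [ha]
        simp only [Nat.add_sub_cancel]
        rw [hsm a]
        have := hmem.2
        rw [ha] at this
        omega
      have h2' : s (L ω') ≤ s K := hs_mono _ _ (by omega)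
      constructor
      · intro h; omega
      · rintro ⟨h, hB⟩
        have := hB (L ω') hmem.1 (by omega)
        omega
    · -- L ω' = K + 1
      constructor
      · intro h
        rw [hc] at h
        simp only [Nat.add_sub_cancel] at h
        exact ⟨by omega, fun j hj1 hj2 => hmin j hj1 (by omega)⟩
      · rintro ⟨h, _⟩
        rw [hc]
        simp only [Nat.add_sub_cancel]
        omega
    · -- K + 1 < L ω' : both sides true
      have hmono : s (K + 1) ≤ s (L ω' - 1) := hs_mono _ _ (by omega)
      have htt : t (K + 1) < τ (K + 1) ω' := hmin (K + 1) (by omega) hc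
      have hsk1 : s (K + 1) = s K + t (K + 1) := hsm K
      refine iff_of_true (by omega) ⟨by omega, fun j hj1 hj2 => hmin j hj1 (by omega)⟩
  have hES : {ω | n < s (L ω - 1) + τ (L ω) ω} ∩ S = R ∩ S := by
    ext ω'
    constructor
    · rintro ⟨h1', h2'⟩
      exact ⟨(hclaim ω' h2').mp h1', h2'⟩
    · rintro ⟨h1', h2'⟩
      exact ⟨(hclaim ω' h2').mpr h1', h2'⟩
  calc P {ω | n < (∑ i ∈ Finset.Icc 1 (L ω - 1), t i) + τ (L ω) ω}
      = P {ω | n < s (L ω - 1) + τ (L ω) ω} := by simp only [hsum]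
    _ = P ({ω | n < s (L ω - 1) + τ (L ω) ω} ∩ S) := hinterS _
    _ = P (R ∩ S) := by rw [hES]
    _ = P R := (hinterS R).symm
    _ = ENNReal.ofReal (q ^ n) := hPR
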